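/- Let n ≥ 2 and let m_1 < ... < m_n be an arithmetic sequence with common difference d, gcd(m_1, d) = 1, m_1 = q(n-1)+r with r ∈ {1,...,n-1}, α := q+d, k := n-r. Then for all integers s ≥ α, the number of monomials of degree s in K[x_1,...,x_{n+1}] not in the monomial ideal generated by {x_i x_j : 2 ≤ i ≤ j ≤ n-1} ∪ {x_1^α x_i : 1 ≤ i ≤ k} equals m_n·s + α(2 - n + k) - C(α+1, 2) - (n-2)·C(α, 2) + 1. -/

import Mathlib

open Finset

namespace Stmt5Aux

/-- The standard monomial associated to data (a, j, b): exponent a on x_1,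
middle variable j (0 = none) with exponent 1, exponent b on x_n, rest on x_{n+1}. -/
def F (n s : ℕ) (p : ℕ × ℕ × ℕ) : ℕ → ℕ := fun i =>
  if i = 1 then p.1
  else if i = n then p.2.2
  else if i = n + 1 then s - p.1 - (if p.2.1 = 0 then 0 else 1) - p.2.2
  else if p.2.1 ≠ 0 ∧ i = p.2.1 then 1 else 0

/-- The parameter set. -/
def D (n s α k : ℕ) : Finset (ℕ × ℕ × ℕ) :=
  (Finset.Icc 0 α).biUnion fun a =>
    ((if a = α then insert 0 (Finset.Icc (k+1) (n-1)) else insert 0 (Finset.Icc 2 (n-1))).biUnion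
      fun j => (Finset.range (if j = 0 then s - a + 1 else s - a)).image fun b => (a, j, b))

lemma F_one (n s : ℕ) (p : ℕ × ℕ × ℕ) : F n s p 1 = p.1 := by simp [F]

lemma F_n (n s : ℕ) (hn : 2 ≤ n) (p : ℕ × ℕ × ℕ) : F n s p n = p.2.2 := by
  simp [F, show n ≠ 1 by omega]

lemma F_top (n s : ℕ) (hn : 2 ≤ n) (p : ℕ × ℕ × ℕ) :
    F n s p (n+1) = s - p.1 - (if p.2.1 = 0 then 0 else 1) - p.2.2 := by
  simp [F, show n + 1 ≠ 1 by omega, show ¬ (n + 1 = n) by omega, show n ≠ 0 by omega]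

lemma F_mid (n s : ℕ) (p : ℕ × ℕ × ℕ) (i : ℕ) (h1 : i ≠ 1) (h2 : i ≠ n) (h3 : i ≠ n+1) :
    F n s p i = if p.2.1 ≠ 0 ∧ i = p.2.1 then 1 else 0 := by
  simp only [F, if_neg h1, if_neg h2, if_neg h3]

lemma mem_D {n s α k : ℕ} (hk1 : 1 ≤ k) (hαs : α ≤ s) (p : ℕ × ℕ × ℕ) :
    p ∈ D n s α k ↔ p.1 ≤ α ∧
      (p.2.1 = 0 ∨ (2 ≤ p.2.1 ∧ p.2.1 ≤ n - 1 ∧ (p.1 = α → k + 1 ≤ p.2.1))) ∧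
      p.1 + (if p.2.1 = 0 then 0 else 1) + p.2.2 ≤ s := by
  obtain ⟨a, j, b⟩ := p
  simp only [D, mem_biUnion, mem_Icc, mem_image, mem_range, Prod.mk.injEq]
  constructor
  · rintro ⟨a', ⟨-, ha'⟩, j', hj', b', hb', rfl, rfl, rfl⟩
    refine ⟨ha', ?_, ?_⟩
    · by_cases hA : a' = α
      · rw [if_pos hA, mem_insert] at hj'
        rcases hj' with h0 | hmem
        · exact Or.inl h0
        · rw [mem_Icc] at hmem; exact Or.inr ⟨by omega, by omega, fun _ => hmem.1⟩
      · rw [if_neg hA, mem_insert] at hj'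
        rcases hj' with h0 | hmem
        · exact Or.inl h0
        · rw [mem_Icc] at hmem; exact Or.inr ⟨hmem.1, hmem.2, fun h => absurd h hA⟩
    · by_cases h0 : j' = 0
      · rw [if_pos h0]; rw [if_pos h0] at hb'; omega
      · rw [if_neg h0]; rw [if_neg h0] at hb'; omega
  · rintro ⟨ha, hj, hb⟩
    refine ⟨a, ⟨Nat.zero_le _, ha⟩, j, ?_, b, ?_, rfl, rfl, rfl⟩
    · by_cases hA : a = α
      · rw [if_pos hA, mem_insert]
        rcases hj with h0 | ⟨h1, h2, h3⟩
        · exact Or.inl h0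
        · exact Or.inr (mem_Icc.mpr ⟨h3 hA, h2⟩)
      · rw [if_neg hA, mem_insert]
        rcases hj with h0 | ⟨h1, h2, h3⟩
        · exact Or.inl h0
        · exact Or.inr (mem_Icc.mpr ⟨h1, h2⟩)
    · by_cases h0 : j = 0
      · rw [if_pos h0]; rw [if_pos h0] at hb; omega
      · rw [if_neg h0]; rw [if_neg h0] at hb; omega

lemma card_D {n s α k : ℕ} (hn : 2 ≤ n) :
    (D n s α k).card = ∑ a ∈ Finset.Icc 0 α,
      ((s - a + 1) + (if a = α then n - 1 - k else n - 2) * (s - a)) := by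
  have himg : ∀ (a j c : ℕ), ((Finset.range c).image fun b => (a, j, b)).card = c := by
    intro a j c
    rw [Finset.card_image_of_injective _ (fun x y h => by simpa using h), Finset.card_range]
  have hmem2 : ∀ (a : ℕ) (J : Finset ℕ) (x : ℕ × ℕ × ℕ),
      x ∈ J.biUnion (fun j => (Finset.range (if j = 0 then s - a + 1 else s - a)).image
        fun b => (a, j, b)) → x.1 = a := by
    intro a J x hx
    simp only [mem_biUnion, mem_image, mem_range] at hx
    obtain ⟨j', -, b, -, rfl⟩ := hx
    rfl
  rw [D, Finset.card_biUnion]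
  · refine Finset.sum_congr rfl fun a _ => ?_
    rw [Finset.card_biUnion]
    · have hsum : ∀ (J : Finset ℕ), 0 ∉ J → (∀ j ∈ J, j ≠ 0) →
          (∑ j ∈ insert 0 J, ((Finset.range (if j = 0 then s - a + 1 else s - a)).image
            (fun b => (a, j, b))).card) = (s - a + 1) + J.card * (s - a) := by
        intro J h0 hJ
        rw [Finset.sum_insert h0, himg, if_pos rfl]
        congr 1
        rw [Finset.sum_congr rfl fun j hj => by rw [himg, if_neg (hJ j hj)]]
        simp [mul_comm]
      split_ifs with hA
      · rw [hsum _ (by simp) (by intro j hj; rw [mem_Icc] at hj; omega), Nat.card_Icc,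
          show n - 1 + 1 - (k + 1) = n - 1 - k by omega]
      · rw [hsum _ (by simp) (by intro j hj; rw [mem_Icc] at hj; omega), Nat.card_Icc,
          show n - 1 + 1 - 2 = n - 2 by omega]
    · intro x hx y hy hxy
      refine Finset.disjoint_left.mpr fun z hz hz' => hxy ?_
      simp only [mem_image, mem_range] at hz hz'
      obtain ⟨b, -, rfl⟩ := hz
      obtain ⟨b', -, h⟩ := hz'
      simp only [Prod.mk.injEq] at h
      exact h.2.1.symm
  · intro x hx y hy hxy
    refine Finset.disjoint_left.mpr fun z hz hz' => hxy ?_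
    have h1 := hmem2 x _ z hz
    have h2 := hmem2 y _ z hz'
    omega

lemma gauss (t : ℕ) : ∑ i ∈ Finset.range t, i = t.choose 2 := by
  induction t with
  | zero => simp
  | succ t ih =>
      have h : (t+1).choose 2 = t.choose 1 + t.choose 2 := Nat.choose_succ_succ t 1
      rw [Finset.sum_range_succ, ih, h, Nat.choose_one_right]
      omega

lemma sum_eval {n s α k : ℕ} (hn : 2 ≤ n) (hkn : k ≤ n - 1) (hαs : α ≤ s) :
    ((∑ a ∈ Finset.Icc 0 α, ((s - a + 1) + (if a = α then n - 1 - k else n - 2) * (s - a)) : ℕ) : ℤ)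
    = ((α:ℤ)+1)*((s:ℤ)+1) - (((α+1).choose 2 : ℕ) : ℤ)
      + ((n:ℤ)-2)*((α:ℤ)*(s:ℤ) - ((α.choose 2 : ℕ) : ℤ))
      + ((n:ℤ)-1-(k:ℤ))*((s:ℤ)-(α:ℤ)) := by
  have hIcc : Finset.Icc 0 α = Finset.range (α+1) := by
    ext x; simp [Nat.lt_succ_iff]
  rw [hIcc, Finset.sum_range_succ, if_pos rfl]
  have hcongr : (∑ a ∈ Finset.range α,
        ((s - a + 1) + (if a = α then n - 1 - k else n - 2) * (s - a)))
      = ∑ a ∈ Finset.range α, ((s - a + 1) + (n - 2) * (s - a)) :=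
    Finset.sum_congr rfl fun a ha => by
      rw [if_neg (show ¬ a = α by rw [Finset.mem_range] at ha; omega)]
  rw [hcongr, Nat.cast_add, Nat.cast_sum]
  have h1 : ∀ a ∈ Finset.range α, (((s - a + 1) + (n-2)*(s-a) : ℕ) : ℤ)
      = (((s:ℤ)+1)-(a:ℤ)) + ((n:ℤ)-2) * ((s:ℤ)-(a:ℤ)) := by
    intro a ha
    rw [Finset.mem_range] at ha
    have h2 : a ≤ s := by omega
    push_cast [Nat.cast_sub h2, Nat.cast_sub hn]
    ring
  rw [Finset.sum_congr rfl h1, Finset.sum_add_distrib, ← Finset.mul_sum,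
    Finset.sum_sub_distrib, Finset.sum_sub_distrib, Finset.sum_const, Finset.sum_const,
    Finset.card_range]
  have hS : ∑ a ∈ Finset.range α, (a:ℤ) = ((α.choose 2 : ℕ) : ℤ) := by
    rw [← Nat.cast_sum, gauss]
  rw [hS]
  have hc : (((α+1).choose 2 : ℕ) : ℤ) = ((α.choose 2 : ℕ) : ℤ) + α := by
    rw [Nat.choose_succ_succ, Nat.choose_one_right]; push_cast; ring
  have h3 : (((s - α + 1) + (n-1-k)*(s-α) : ℕ) : ℤ)
      = ((s:ℤ)-(α:ℤ)+1) + ((n:ℤ)-1-(k:ℤ)) * ((s:ℤ)-(α:ℤ)) := by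
    push_cast [Nat.cast_sub hαs, Nat.cast_sub hkn, Nat.cast_sub (show 1 ≤ n by omega)]
    ring
  rw [h3, hc]
  push_cast
  ring

end Stmt5Aux

open Stmt5Aux in
theorem stmt_5 (n d m1 q r s : ℕ) (m : ℕ → ℕ)
    (hn : 2 ≤ n) (hd : 1 ≤ d) (hm1 : 1 ≤ m1)
    (hgcd : Nat.gcd m1 d = 1)
    (hm : ∀ i, 1 ≤ i → i ≤ n → m i = m1 + (i - 1) * d)
    (hdiv : m1 = q * (n - 1) + r) (hr1 : 1 ≤ r) (hr2 : r ≤ n - 1)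
    (hs : q + d ≤ s) :
    (Set.ncard {γ : ℕ → ℕ |
        (∀ i, γ i ≠ 0 → 1 ≤ i ∧ i ≤ n + 1) ∧
        (∑ i ∈ Finset.Icc 1 (n + 1), γ i) = s ∧
        (∀ i j, 2 ≤ i → i ≤ j → j ≤ n - 1 →
          ¬ (if i = j then 2 ≤ γ i else 1 ≤ γ i ∧ 1 ≤ γ j)) ∧
        (∀ i, 1 ≤ i → i ≤ n - r →
          ¬ (if i = 1 then q + d + 1 ≤ γ 1 else q + d ≤ γ 1 ∧ 1 ≤ γ i))} : ℤ) =
      (m n : ℤ) * s + (q + d : ℤ) * (2 - (n : ℤ) + ((n - r : ℕ) : ℤ))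
        - (Nat.choose (q + d + 1) 2 : ℤ) - ((n : ℤ) - 2) * (Nat.choose (q + d) 2 : ℤ)
        + 1 := by
  classical
  have hk1 : 1 ≤ n - r := by omega
  have hkn : n - r ≤ n - 1 := by omega
  have hαs : q + d ≤ s := hs
  have hsplit : Finset.Icc 1 (n+1) = insert 1 (insert n (insert (n+1) (Finset.Icc 2 (n-1)))) := by
    ext x
    simp only [Finset.mem_Icc, Finset.mem_insert]
    omega
  have hsumdec : ∀ γ : ℕ → ℕ, (∑ i ∈ Finset.Icc 1 (n+1), γ i)
      = γ 1 + (γ n + (γ (n+1) + ∑ i ∈ Finset.Icc 2 (n-1), γ i)) := by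
    intro γ
    rw [hsplit, Finset.sum_insert (by simp only [Finset.mem_insert, Finset.mem_Icc]; omega),
      Finset.sum_insert (by simp only [Finset.mem_insert, Finset.mem_Icc]; omega),
      Finset.sum_insert (by simp only [Finset.mem_Icc]; omega)]
  -- the middle-sum of F
  have hmidsum : ∀ p : ℕ × ℕ × ℕ, (p.2.1 = 0 ∨ (2 ≤ p.2.1 ∧ p.2.1 ≤ n - 1)) →
      (∑ i ∈ Finset.Icc 2 (n-1), F n s p i) = (if p.2.1 = 0 then 0 else 1) := by
    intro p hp
    have hc : ∀ i ∈ Finset.Icc 2 (n-1), F n s p i = if p.2.1 ≠ 0 ∧ i = p.2.1 then 1 else 0 := by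
      intro i hi
      rw [Finset.mem_Icc] at hi
      exact F_mid n s p i (by omega) (by omega) (by omega)
    rw [Finset.sum_congr rfl hc]
    by_cases h0 : p.2.1 = 0
    · simp [h0]
    · rw [if_neg h0]
      have hjm : p.2.1 ∈ Finset.Icc 2 (n-1) := by
        rcases hp with h | h
        · exact absurd h h0
        · exact Finset.mem_Icc.mpr h
      have hx : (∑ i ∈ Finset.Icc 2 (n-1), if p.2.1 ≠ 0 ∧ i = p.2.1 then 1 else 0)
          = ∑ i ∈ Finset.Icc 2 (n-1), if i = p.2.1 then (1:ℕ) else 0 :=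
        Finset.sum_congr rfl fun i _ => by simp only [ne_eq, h0, not_false_eq_true, true_and]
      rw [hx, Finset.sum_ite_eq' (Finset.Icc 2 (n-1)) p.2.1 (fun _ => 1), if_pos hjm]
  have hset : {γ : ℕ → ℕ |
        (∀ i, γ i ≠ 0 → 1 ≤ i ∧ i ≤ n + 1) ∧
        (∑ i ∈ Finset.Icc 1 (n + 1), γ i) = s ∧
        (∀ i j, 2 ≤ i → i ≤ j → j ≤ n - 1 →
          ¬ (if i = j then 2 ≤ γ i else 1 ≤ γ i ∧ 1 ≤ γ j)) ∧
        (∀ i, 1 ≤ i → i ≤ n - r →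
          ¬ (if i = 1 then q + d + 1 ≤ γ 1 else q + d ≤ γ 1 ∧ 1 ≤ γ i))}
      = ↑((D n s (q+d) (n-r)).image (F n s)) := by
    ext γ
    simp only [Set.mem_setOf_eq, Finset.coe_image, Set.mem_image, Finset.mem_coe]
    constructor
    · rintro ⟨hsupp, hsum, hB, hC⟩
      have hmid1 : ∀ i, 2 ≤ i → i ≤ n - 1 → γ i ≤ 1 := by
        intro i h2 h3
        have h := hB i i h2 le_rfl h3
        rw [if_pos rfl] at h
        omega
      have hmid2 : ∀ i j, 2 ≤ i → i < j → j ≤ n-1 → γ i = 0 ∨ γ j = 0 := by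
        intro i j h2 hij h3
        have h := hB i j (by omega) (le_of_lt hij) h3
        rw [if_neg (by omega)] at h
        omega
      have hγ1 : γ 1 ≤ q + d := by
        have h := hC 1 le_rfl (by omega)
        rw [if_pos rfl] at h
        omega
      have hdec := hsumdec γ
      rcases Finset.eq_empty_or_nonempty ((Finset.Icc 2 (n-1)).filter (fun i => γ i ≠ 0))
        with hTe | ⟨j0, hj0⟩
      · -- no middle variable
        have hze : ∀ i, 2 ≤ i → i ≤ n - 1 → γ i = 0 := by
          intro i h2 h3
          by_contra hne
          have : i ∈ (Finset.Icc 2 (n-1)).filter (fun i => γ i ≠ 0) :=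
            Finset.mem_filter.mpr ⟨Finset.mem_Icc.mpr ⟨h2, h3⟩, hne⟩
          rw [hTe] at this
          exact absurd this (Finset.notMem_empty i)
        have hmz : (∑ i ∈ Finset.Icc 2 (n-1), γ i) = 0 :=
          Finset.sum_eq_zero fun i hi => hze i (Finset.mem_Icc.mp hi).1 (Finset.mem_Icc.mp hi).2
        rw [hmz] at hdec
        refine ⟨(γ 1, 0, γ n), (mem_D hk1 hαs _).mpr ⟨hγ1, Or.inl rfl, ?_⟩, ?_⟩
        · show γ 1 + (if (0:ℕ) = 0 then 0 else 1) + γ n ≤ s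
          rw [if_pos rfl]
          omega
        funext i
        by_cases h1 : i = 1
        · rw [h1, F_one]
        · by_cases h2 : i = n
          · rw [h2, F_n n s hn]
          · by_cases h3 : i = n + 1
            · rw [h3, F_top n s hn]
              show s - γ 1 - (if (0:ℕ) = 0 then 0 else 1) - γ n = γ (n+1)
              rw [if_pos rfl]
              omega
            · rw [F_mid n s _ i h1 h2 h3, if_neg (by simp)]
              by_cases h4 : 2 ≤ i ∧ i ≤ n - 1
              · exact (hze i h4.1 h4.2).symm
              · by_contra hne
                have := hsupp i (fun hc => hne hc.symm)
                omega
      · -- middle variable j0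
        rw [Finset.mem_filter, Finset.mem_Icc] at hj0
        obtain ⟨⟨hj02, hj0n⟩, hj0ne⟩ := hj0
        have hj01 : γ j0 = 1 := by
          have := hmid1 j0 hj02 hj0n
          omega
        have hze : ∀ i, 2 ≤ i → i ≤ n - 1 → i ≠ j0 → γ i = 0 := by
          intro i h2 h3 hne
          rcases lt_trichotomy i j0 with h | h | h
          · rcases hmid2 i j0 h2 h hj0n with h' | h'
            · exact h'
            · exact absurd h' hj0ne
          · exact absurd h hne
          · rcases hmid2 j0 i hj02 h h3 with h' | h'
            · exact absurd h' hj0ne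
            · exact h'
        have hmz : (∑ i ∈ Finset.Icc 2 (n-1), γ i) = 1 := by
          rw [Finset.sum_eq_single_of_mem j0 (Finset.mem_Icc.mpr ⟨hj02, hj0n⟩)
            (fun i hi hne => hze i (Finset.mem_Icc.mp hi).1 (Finset.mem_Icc.mp hi).2 hne), hj01]
        rw [hmz] at hdec
        have hjk : γ 1 = q + d → n - r + 1 ≤ j0 := by
          intro hA
          by_contra hcon
          have h := hC j0 (by omega) (by omega)
          rw [if_neg (by omega)] at h
          exact h ⟨le_of_eq hA.symm, by omega⟩
        refine ⟨(γ 1, j0, γ n), (mem_D hk1 hαs _).mpr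
          ⟨hγ1, Or.inr ⟨hj02, hj0n, hjk⟩, ?_⟩, ?_⟩
        · simp only [if_neg (show ¬ j0 = 0 by omega)]
          omega
        · funext i
          by_cases h1 : i = 1
          · rw [h1, F_one]
          · by_cases h2 : i = n
            · rw [h2, F_n n s hn]
            · by_cases h3 : i = n + 1
              · rw [h3, F_top n s hn]
                simp only [if_neg (show ¬ j0 = 0 by omega)]
                omega
              · rw [F_mid n s _ i h1 h2 h3]
                by_cases h5 : i = j0
                · rw [if_pos ⟨by simp; omega, h5⟩, h5, hj01]
                · rw [if_neg (by simp [h5])]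
                  by_cases h4 : 2 ≤ i ∧ i ≤ n - 1
                  · exact (hze i h4.1 h4.2 h5).symm
                  · by_contra hne
                    have := hsupp i (fun hc => hne hc.symm)
                    omega
    · rintro ⟨p, hp, rfl⟩
      rw [mem_D hk1 hαs] at hp
      obtain ⟨ha, hj, hab⟩ := hp
      refine ⟨?_, ?_, ?_, ?_⟩
      · intro i hi
        by_contra hcon
        push_neg at hcon
        apply hi
        rw [F_mid n s p i (by omega) (by omega) (by omega), if_neg]
        rintro ⟨hj0, rfl⟩
        rcases hj with h | ⟨h1, h2, h3⟩
        · exact hj0 h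
        · omega
      · rw [hsumdec, F_one, F_n n s hn, F_top n s hn,
          hmidsum p (by rcases hj with h | h; exact Or.inl h; exact Or.inr ⟨h.1, h.2.1⟩)]
        by_cases h0 : p.2.1 = 0 <;>
          simp only [h0, if_true, if_false] at hab ⊢ <;> omega
      · intro i j' h2 hij hj'
        by_cases he : i = j'
        · rw [if_pos he]
          intro hcon
          rw [F_mid n s p i (by omega) (by omega) (by omega)] at hcon
          split_ifs at hcon <;> omega
        · rw [if_neg he]
          rintro ⟨hgi, hgj⟩
          rw [F_mid n s p i (by omega) (by omega) (by omega)] at hgi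
          rw [F_mid n s p j' (by omega) (by omega) (by omega)] at hgj
          split_ifs at hgi with hc1
          · split_ifs at hgj with hc2
            · exact he (hc1.2.trans hc2.2.symm)
            · omega
          · omega
      · intro i h1 hik
        by_cases hi1 : i = 1
        · rw [hi1, if_pos rfl, F_one]
          omega
        · rw [if_neg hi1]
          rintro ⟨hge, hpos⟩
          rw [F_one] at hge
          have haA : p.1 = q + d := by omega
          rw [F_mid n s p i hi1 (by omega) (by omega)] at hpos
          split_ifs at hpos with hc
          · rcases hj with h | ⟨hh1, hh2, hh3⟩
            · exact hc.1 h
            · have := hh3 haA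
              omega
          · omega
  have hinj : Set.InjOn (F n s) ↑(D n s (q+d) (n-r)) := by
    intro p hp p' hp' hFeq
    rw [Finset.mem_coe, mem_D hk1 hαs] at hp hp'
    have h1 : p.1 = p'.1 := by
      have h := congrFun hFeq 1
      rwa [F_one, F_one] at h
    have h2 : p.2.2 = p'.2.2 := by
      have h := congrFun hFeq n
      rwa [F_n n s hn, F_n n s hn] at h
    have h3 : p.2.1 = p'.2.1 := by
      by_cases hj0 : p.2.1 = 0
      · by_cases hj0' : p'.2.1 = 0
        · rw [hj0, hj0']
        · have hjm : 2 ≤ p'.2.1 ∧ p'.2.1 ≤ n - 1 := by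
            rcases hp'.2.1 with h | h
            · exact absurd h hj0'
            · exact ⟨h.1, h.2.1⟩
          have e1 := congrFun hFeq p'.2.1
          rw [F_mid n s p p'.2.1 (by omega) (by omega) (by omega),
            F_mid n s p' p'.2.1 (by omega) (by omega) (by omega),
            if_neg (by simp [hj0]), if_pos ⟨hj0', rfl⟩] at e1
          exact absurd e1 (by omega)
      · have hjm : 2 ≤ p.2.1 ∧ p.2.1 ≤ n - 1 := by
          rcases hp.2.1 with h | h
          · exact absurd h hj0
          · exact ⟨h.1, h.2.1⟩
        have e1 := congrFun hFeq p.2.1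
        rw [F_mid n s p p.2.1 (by omega) (by omega) (by omega),
          F_mid n s p' p.2.1 (by omega) (by omega) (by omega),
          if_pos ⟨hj0, rfl⟩] at e1
        split_ifs at e1 with hc
        all_goals omega
    exact Prod.ext h1 (Prod.ext h3 h2)
  rw [hset, Set.ncard_coe_finset, Finset.card_image_of_injOn hinj,
    card_D hn, sum_eval hn hkn hαs, hm n (by omega) le_rfl, hdiv]
  have e1 : ((n - r : ℕ) : ℤ) = (n : ℤ) - (r : ℤ) := by omega
  have e2 : ((n - 1 : ℕ) : ℤ) = (n : ℤ) - 1 := by omega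
  push_cast [e1, e2]
  ring
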